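/- Let k ≥ 2, n ≥ 2, let F ⊆ {0,1,…,k-1}^n be a set with |F| ≥ 2, and let d be an integer such that for every r ≤ n and every index set I ⊆ {1,…,n} of size r, the projection of F onto the coordinates in I has cardinality at most Σ_{i=0}^{d} C(r,i)·k^i. Suppose γ ∈ [0,1) is such that every pair of distinct x, y ∈ F satisfies |γ_k(x,y)| ≤ γ. Then for every integer r with 2 ≤ r ≤ n, (Σ_{i=0}^{d} C(r,i)·k^i)^{-1} < 1/|F| + (1/k + (k-1)γ/k)^r. -/

import Mathlib

open Finset

/-- Normalized Hamming distance on `[k]^n`. -/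
noncomputable def hamK (k n : ℕ) (x y : Fin n → Fin k) : ℝ :=
  ((Finset.univ.filter fun i => x i ≠ y i).card : ℝ) / n

/-- The `k`-ary correlation `γ_k(x,y) = 1 - (k/(k-1))·ρ(x,y)`. -/
noncomputable def gammaK (k n : ℕ) (x y : Fin n → Fin k) : ℝ :=
  1 - ((k : ℝ) / ((k : ℝ) - 1)) * hamK k n x y

private lemma choose_mul_pow_lt {a n r : ℕ} (hr2 : 2 ≤ r) (hra : r ≤ a) (han : a < n) :
    a.choose r * n ^ r < n.choose r * a ^ r := by
  have key : a.descFactorial r * n ^ r < n.descFactorial r * a ^ r := by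
    have e : ∀ m : ℕ, m ^ r = ∏ _i ∈ Finset.range r, m := fun m => by
      rw [Finset.prod_const, Finset.card_range]
    rw [Nat.descFactorial_eq_prod_range, Nat.descFactorial_eq_prod_range, e n, e a,
      ← Finset.prod_mul_distrib, ← Finset.prod_mul_distrib]
    refine Finset.prod_lt_prod ?_ ?_ ⟨1, Finset.mem_range.2 (by omega), ?_⟩
    · intro i hi
      have hi' : i < r := Finset.mem_range.1 hi
      have h1 : 0 < a - i := by omega
      have h2 : 0 < n := by omega
      positivity
    · intro i hi
      have hi' : i < r := Finset.mem_range.1 hi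
      rw [Nat.sub_mul, Nat.sub_mul, mul_comm n a]
      exact Nat.sub_le_sub_left (Nat.mul_le_mul_left i (le_of_lt han)) (a * n)
    · rw [Nat.sub_mul, Nat.sub_mul, one_mul, one_mul, mul_comm n a]
      have hn1 : n ≤ a * n := Nat.le_mul_of_pos_left n (by omega)
      omega
  rw [Nat.descFactorial_eq_factorial_mul_choose, Nat.descFactorial_eq_factorial_mul_choose,
    mul_assoc, mul_assoc] at key
  exact lt_of_mul_lt_mul_left key (Nat.zero_le _)

/-- The `k`-ary key projection inequality: if `F ⊆ [k]^n` with `|F| ≥ 2` satisfies the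
generalized Sauer bound with parameter `d` and all distinct pairs satisfy `|γ_k(x,y)| ≤ γ`
with `γ ∈ [0,1)`, then for every integer `2 ≤ r ≤ n`,
`(Σ_{i=0}^d C(r,i)·k^i)⁻¹ < 1/|F| + (1/k + (k-1)γ/k)^r`. -/
theorem stmt17 (k n d : ℕ) (hk : 2 ≤ k) (hn : 2 ≤ n) (F : Finset (Fin n → Fin k))
    (hcard : 2 ≤ F.card)
    (hSauer : ∀ r : ℕ, r ≤ n → ∀ I : Finset (Fin n), I.card = r →
      (F.image (fun x => fun i : I => x i.1)).card
        ≤ ∑ i ∈ Finset.range (d + 1), r.choose i * k ^ i)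
    (γ : ℝ) (hγ0 : 0 ≤ γ) (hγ1 : γ < 1)
    (horth : ∀ x ∈ F, ∀ y ∈ F, x ≠ y → |gammaK k n x y| ≤ γ)
    (r : ℕ) (hr2 : 2 ≤ r) (hrn : r ≤ n) :
    (∑ i ∈ Finset.range (d + 1), (r.choose i : ℝ) * (k : ℝ) ^ i)⁻¹
      < 1 / (F.card : ℝ) + (1 / (k : ℝ) + ((k : ℝ) - 1) * γ / (k : ℝ)) ^ r := by
  classical
  set p : ℝ := 1 / (k : ℝ) + ((k : ℝ) - 1) * γ / (k : ℝ) with hp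
  have hk1 : (1 : ℝ) < (k : ℝ) := by exact_mod_cast hk.trans_lt' one_lt_two
  have hkR : (0 : ℝ) < (k : ℝ) := by positivity
  have hnR : (0 : ℝ) < (n : ℝ) := by exact_mod_cast (by omega : 0 < n)
  have hppos : 0 < p := by
    rw [hp]
    have h1 : (0:ℝ) < 1 / (k:ℝ) := by positivity
    have h2 : (0:ℝ) ≤ ((k:ℝ) - 1) * γ / k := by
      apply div_nonneg (mul_nonneg (by linarith) hγ0) hkR.le
    linarith
  set S : ℕ := ∑ i ∈ Finset.range (d + 1), r.choose i * k ^ i with hS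
  have hS0 : 0 < S := by
    have : r.choose 0 * k ^ 0 ≤ S := by
      rw [hS]; exact Finset.single_le_sum (f := fun i => r.choose i * k ^ i)
        (fun i _ => Nat.zero_le _) (Finset.mem_range.2 (by omega))
    simpa using Nat.lt_of_lt_of_le (by norm_num) this
  set A : (Fin n → Fin k) → (Fin n → Fin k) → Finset (Fin n) :=
    fun x y => Finset.univ.filter (fun i => x i = y i) with hA
  -- per-pair bounds
  have hAcard : ∀ x y : Fin n → Fin k, (A x y).card ≤ n := fun x y => by
    simpa using Finset.card_le_univ (A x y)
  have hpair : ∀ x ∈ F, ∀ y ∈ F, x ≠ y →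
      ((A x y).card.choose r : ℝ) < (n.choose r : ℝ) * p ^ r := by
    intro x hx y hy hxy
    obtain ⟨i0, hi0⟩ := Function.ne_iff.1 hxy
    have han : (A x y).card < n := by
      rcases lt_or_eq_of_le (hAcard x y) with h | h
      · exact h
      · exfalso
        have huniv : A x y = Finset.univ := by
          apply Finset.eq_univ_of_card
          rw [h, Fintype.card_fin]
        have := (Finset.eq_univ_iff_forall.1 huniv) i0
        rw [hA] at this
        simp at this
        exact hi0 this
    have hak : ((A x y).card : ℝ) ≤ p * n := by
      have hg := (abs_le.1 (horth x hx y hy hxy)).2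
      have hDA : (A x y).card + (Finset.univ.filter fun i => x i ≠ y i).card = n := by
        rw [hA]
        simpa [Fintype.card_fin] using
          Finset.card_filter_add_card_filter_not (s := (Finset.univ : Finset (Fin n)))
            (p := fun i => x i = y i)
      set D := (Finset.univ.filter fun i => x i ≠ y i).card with hD
      unfold gammaK hamK at hg
      rw [← hD] at hg
      have hk1' : (0:ℝ) < (k:ℝ) - 1 := by linarith
      have h2 : (1 - γ) * (((k:ℝ) - 1) * n) ≤ (k:ℝ) * D := by
        have e : ((k:ℝ) / ((k:ℝ) - 1)) * ((D:ℝ) / n) * (((k:ℝ) - 1) * n) = (k:ℝ) * D := by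
          field_simp
        nlinarith [mul_le_mul_of_nonneg_right
          (by linarith : (1:ℝ) - γ ≤ ((k:ℝ) / ((k:ℝ) - 1)) * ((D:ℝ) / n))
          (by positivity : (0:ℝ) ≤ ((k:ℝ) - 1) * n)]
      have hacast : ((A x y).card : ℝ) = (n : ℝ) - D := by
        push_cast [← hDA]
        ring
      rw [hacast, hp]
      have : (1 / (k:ℝ) + ((k:ℝ) - 1) * γ / k) * n = ((1 + ((k:ℝ)-1)*γ) * n) / k := by
        field_simp
      rw [this, le_div_iff₀ hkR]
      nlinarith [h2]
    rcases lt_or_ge (A x y).card r with h | h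
    · rw [Nat.choose_eq_zero_of_lt h]
      push_cast
      exact mul_pos (by exact_mod_cast Nat.choose_pos hrn) (pow_pos hppos r)
    · have key := choose_mul_pow_lt hr2 h han
      have hc : ((A x y).card.choose r : ℝ) * (n:ℝ) ^ r
          < (n.choose r : ℝ) * ((A x y).card : ℝ) ^ r := by exact_mod_cast key
      have hnr : (0:ℝ) < (n:ℝ) ^ r := by positivity
      rw [← mul_lt_mul_iff_of_pos_right hnr]
      refine hc.trans_le ?_
      have h2 : ((A x y).card : ℝ) ^ r ≤ (p * n) ^ r :=
        pow_le_pow_left₀ (by positivity) hak r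
      calc (n.choose r : ℝ) * ((A x y).card : ℝ) ^ r
          ≤ (n.choose r : ℝ) * (p * n) ^ r :=
            mul_le_mul_of_nonneg_left h2 (by positivity)
        _ = (n.choose r : ℝ) * p ^ r * (n:ℝ) ^ r := by rw [mul_pow]; ring
  -- number of pairs agreeing on I
  set NN : Finset (Fin n) → ℕ :=
    fun I => ((F ×ˢ F).filter fun q => ∀ i ∈ I, q.1 i = q.2 i).card with hNNdef
  have hpig : ∀ I : Finset (Fin n), I.card = r → F.card ^ 2 ≤ S * NN I := by
    intro I hI
    set g : (Fin n → Fin k) → (I → Fin k) := fun x => fun i : I => x i.1 with hg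
    set T := F.image g with hT
    have hTS : T.card ≤ S := hSauer r hrn I hI
    set c : (I → Fin k) → ℕ := fun t => (F.filter fun y => g y = t).card with hc
    have hFsum : F.card = ∑ t ∈ T, c t := Finset.card_eq_sum_card_image g F
    have hPg : ∀ q : (Fin n → Fin k) × (Fin n → Fin k),
        (∀ i ∈ I, q.1 i = q.2 i) ↔ g q.1 = g q.2 := by
      intro q
      rw [hg, funext_iff]
      simp [Subtype.forall]
    have hNN : NN I = ∑ t ∈ T, c t * c t := by
      calc NN I = ∑ x ∈ F, ∑ y ∈ F, if g x = g y then 1 else 0 := by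
            show ((F ×ˢ F).filter fun q => ∀ i ∈ I, q.1 i = q.2 i).card = _
            rw [Finset.card_filter, Finset.sum_product]
            exact Finset.sum_congr rfl fun x _ => Finset.sum_congr rfl fun y _ => by
              simp only [hPg (x, y)]
        _ = ∑ x ∈ F, c (g x) := by
            refine Finset.sum_congr rfl fun x _ => ?_
            show _ = (F.filter fun y => g y = g x).card
            rw [Finset.card_filter]
            exact Finset.sum_congr rfl fun y _ => by simp [eq_comm]
        _ = ∑ t ∈ T, c t * c t := by
            rw [Finset.sum_comp c g]
            exact Finset.sum_congr rfl fun t _ => by rw [smul_eq_mul, hc]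
    have hcs := Finset.sum_mul_sq_le_sq_mul_sq (R := ℕ) T (fun t => c t) (fun _ => 1)
    simp only [mul_one, one_pow, Finset.sum_const, smul_eq_mul] at hcs
    calc F.card ^ 2 = (∑ t ∈ T, c t) ^ 2 := by rw [hFsum]
      _ ≤ (∑ t ∈ T, c t ^ 2) * T.card := hcs
      _ ≤ (∑ t ∈ T, c t ^ 2) * S := Nat.mul_le_mul_left _ hTS
      _ = S * NN I := by
          rw [hNN, mul_comm]
          congr 1
          exact Finset.sum_congr rfl fun t _ => pow_two (c t)
  -- sum over all r-subsets
  set P := Finset.powersetCard r (Finset.univ : Finset (Fin n)) with hP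
  have hPcard : P.card = n.choose r := by
    rw [hP, Finset.card_powersetCard, Finset.card_univ, Fintype.card_fin]
  have hsum1 : n.choose r * F.card ^ 2 ≤ S * ∑ I ∈ P, NN I := by
    calc n.choose r * F.card ^ 2 = ∑ _I ∈ P, F.card ^ 2 := by
          rw [Finset.sum_const, hPcard, smul_eq_mul]
      _ ≤ ∑ I ∈ P, S * NN I :=
          Finset.sum_le_sum fun I hI => hpig I (Finset.mem_powersetCard.1 hI).2
      _ = S * ∑ I ∈ P, NN I := by rw [Finset.mul_sum]
  have hswap : ∑ I ∈ P, NN I = ∑ q ∈ F ×ˢ F, (A q.1 q.2).card.choose r := by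
    have hfil : ∀ q : (Fin n → Fin k) × (Fin n → Fin k),
        (P.filter fun I => ∀ i ∈ I, q.1 i = q.2 i) = Finset.powersetCard r (A q.1 q.2) := by
      intro q
      ext J
      simp only [hP, hA, Finset.mem_filter, Finset.mem_powersetCard, Finset.subset_iff,
        Finset.mem_filter, Finset.mem_univ, true_and]
      tauto
    calc ∑ I ∈ P, NN I
        = ∑ I ∈ P, ∑ q ∈ F ×ˢ F, if (∀ i ∈ I, q.1 i = q.2 i) then 1 else 0 := by
          exact Finset.sum_congr rfl fun I _ => Finset.card_filter _ _
      _ = ∑ q ∈ F ×ˢ F, ∑ I ∈ P, if (∀ i ∈ I, q.1 i = q.2 i) then 1 else 0 := Finset.sum_comm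
      _ = ∑ q ∈ F ×ˢ F, (A q.1 q.2).card.choose r := by
          refine Finset.sum_congr rfl fun q _ => ?_
          rw [← Finset.card_filter, hfil q, Finset.card_powersetCard]
  -- diagonal bound
  have hdiagcard : ((F ×ˢ F).filter fun q => q.1 = q.2).card ≤ F.card := by
    apply Finset.card_le_card_of_injOn (fun q => q.1)
    · intro q hq
      exact (Finset.mem_product.1 (Finset.mem_filter.1 hq).1).1
    · intro q hq q' hq' h
      have e1 := (Finset.mem_filter.1 hq).2
      have e2 := (Finset.mem_filter.1 hq').2
      have h' : q.1 = q'.1 := h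
      exact Prod.ext h' (by rw [← e1, ← e2, h'])
  have hdiag : ∑ q ∈ (F ×ˢ F).filter (fun q => q.1 = q.2), (A q.1 q.2).card.choose r
      ≤ F.card * n.choose r := by
    calc ∑ q ∈ (F ×ˢ F).filter (fun q => q.1 = q.2), (A q.1 q.2).card.choose r
        ≤ ((F ×ˢ F).filter fun q => q.1 = q.2).card • n.choose r :=
          Finset.sum_le_card_nsmul _ _ _ fun q _ => Nat.choose_le_choose r (hAcard _ _)
      _ = ((F ×ˢ F).filter fun q => q.1 = q.2).card * n.choose r := smul_eq_mul ..
      _ ≤ F.card * n.choose r := Nat.mul_le_mul_right _ hdiagcard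
  -- off-diagonal strict bound (in ℝ)
  have hoffne : ((F ×ˢ F).filter fun q => ¬ q.1 = q.2).Nonempty := by
    obtain ⟨x, hx, y, hy, hxy⟩ := Finset.one_lt_card.1 hcard
    exact ⟨(x, y), Finset.mem_filter.2 ⟨Finset.mem_product.2 ⟨hx, hy⟩, hxy⟩⟩
  have hoff : (∑ q ∈ (F ×ˢ F).filter (fun q => ¬ q.1 = q.2),
        ((A q.1 q.2).card.choose r : ℝ))
      < (F.card : ℝ) ^ 2 * ((n.choose r : ℝ) * p ^ r) := by
    have hstep : (∑ q ∈ (F ×ˢ F).filter (fun q => ¬ q.1 = q.2),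
          ((A q.1 q.2).card.choose r : ℝ))
        < ∑ _q ∈ (F ×ˢ F).filter (fun q => ¬ q.1 = q.2), (n.choose r : ℝ) * p ^ r := by
      refine Finset.sum_lt_sum_of_nonempty hoffne fun q hq => ?_
      have hq1 := Finset.mem_filter.1 hq
      have hmem := Finset.mem_product.1 hq1.1
      exact hpair q.1 hmem.1 q.2 hmem.2 hq1.2
    refine hstep.trans_le ?_
    rw [Finset.sum_const, nsmul_eq_mul]
    have hcle : (((F ×ˢ F).filter fun q => ¬ q.1 = q.2).card : ℝ) ≤ (F.card : ℝ) ^ 2 := by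
      have := Finset.card_filter_le (F ×ˢ F) (fun q => ¬ q.1 = q.2)
      rw [Finset.card_product] at this
      have : (((F ×ˢ F).filter fun q => ¬ q.1 = q.2).card : ℝ) ≤ (F.card * F.card : ℕ) := by
        exact_mod_cast this
      push_cast at this
      nlinarith [this]
    exact mul_le_mul_of_nonneg_right hcle (by positivity)
  -- assemble in ℝ
  have hC : (0:ℝ) < (n.choose r : ℝ) := by exact_mod_cast Nat.choose_pos hrn
  have hSr : (0:ℝ) < (S : ℝ) := by exact_mod_cast hS0
  have hFc : (0:ℝ) < (F.card : ℝ) := by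
    have : 0 < F.card := by omega
    exact_mod_cast this
  have htot : (∑ q ∈ F ×ˢ F, ((A q.1 q.2).card.choose r : ℝ))
      < (F.card : ℝ) * (n.choose r : ℝ) + (F.card : ℝ) ^ 2 * ((n.choose r : ℝ) * p ^ r) := by
    rw [← Finset.sum_filter_add_sum_filter_not (F ×ˢ F) (fun q => q.1 = q.2)]
    have hd : (∑ q ∈ (F ×ˢ F).filter (fun q => q.1 = q.2), ((A q.1 q.2).card.choose r : ℝ))
        ≤ (F.card : ℝ) * (n.choose r : ℝ) := by exact_mod_cast hdiag
    linarith [hoff, hd]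
  have h1 : ((n.choose r : ℝ)) * (F.card : ℝ) ^ 2
      ≤ (S : ℝ) * ∑ q ∈ F ×ˢ F, ((A q.1 q.2).card.choose r : ℝ) := by
    have := hsum1.trans_eq (congrArg (S * ·) hswap)
    exact_mod_cast this
  have main : ((n.choose r : ℝ)) * (F.card : ℝ) ^ 2
      < (n.choose r : ℝ) * ((S:ℝ) * (F.card:ℝ) + (S:ℝ) * (F.card:ℝ)^2 * p ^ r) := by
    have h2 := mul_lt_mul_of_pos_left htot hSr
    calc ((n.choose r : ℝ)) * (F.card : ℝ) ^ 2
        ≤ (S : ℝ) * ∑ q ∈ F ×ˢ F, ((A q.1 q.2).card.choose r : ℝ) := h1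
      _ < (S:ℝ) * ((F.card : ℝ) * (n.choose r : ℝ)
            + (F.card : ℝ) ^ 2 * ((n.choose r : ℝ) * p ^ r)) := h2
      _ = (n.choose r : ℝ) * ((S:ℝ) * (F.card:ℝ) + (S:ℝ) * (F.card:ℝ)^2 * p ^ r) := by ring
  have key : (F.card : ℝ) ^ 2 < (S:ℝ) * (F.card:ℝ) + (S:ℝ) * (F.card:ℝ)^2 * p ^ r :=
    lt_of_mul_lt_mul_left main hC.le
  have hScast : ((S : ℕ) : ℝ) = ∑ i ∈ Finset.range (d + 1), (r.choose i : ℝ) * (k : ℝ) ^ i := by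
    rw [hS]
    push_cast
    ring
  rw [← hScast]
  rw [← mul_lt_mul_iff_of_pos_right (show (0:ℝ) < (S:ℝ) * (F.card:ℝ)^2 by positivity)]
  have hS0' : (S:ℝ) ≠ 0 := ne_of_gt hSr
  have hF0' : (F.card:ℝ) ≠ 0 := ne_of_gt hFc
  have e1 : ((S:ℝ))⁻¹ * ((S:ℝ) * (F.card:ℝ)^2) = (F.card:ℝ)^2 := by
    rw [← mul_assoc, inv_mul_cancel₀ hS0', one_mul]
  have e2 : (1/(F.card:ℝ) + p ^ r) * ((S:ℝ) * (F.card:ℝ)^2)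
      = (S:ℝ) * (F.card:ℝ) + (S:ℝ) * (F.card:ℝ)^2 * p ^ r := by
    have e3 : (1/(F.card:ℝ)) * ((S:ℝ) * (F.card:ℝ)^2)
        = (S:ℝ) * ((F.card:ℝ)⁻¹ * (F.card:ℝ)) * (F.card:ℝ) := by
      rw [one_div]; ring
    rw [add_mul, e3, inv_mul_cancel₀ hF0', mul_one]
    ring
  rw [e1, e2]
  exact key
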